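/- arXiv:1506.01901 — 5 statements merged into one kernel-verified Lean document; each statement's English description precedes it below -/
import Mathlib

section
/- Let (α,p) ∈ (0,1)×[1,∞) and let {K_j}_{j=1}^∞ be compact subsets of ℝⁿ with K_j ⊇ K_{j+1} for every j. Then C_{α,p,∞}(∩_{j=1}^∞ K_j) = lim_{j→∞} C_{α,p,∞}(K_j). -/
open MeasureTheory ENNReal

noncomputable def besovSeminorm (n : ℕ) (α p : ℝ)
    (f : EuclideanSpace ℝ (Fin n) → ℝ) : ℝ≥0∞ :=
  ⨆ (h : EuclideanSpace ℝ (Fin n)) (_ : h ≠ 0),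
    ENNReal.ofReal (‖h‖ ^ (-α)) *
      eLpNorm (fun x => f (x + h) - f x) (ENNReal.ofReal p) volume

def besovAdmissible (n : ℕ) (α p : ℝ) (E : Set (EuclideanSpace ℝ (Fin n)))
    (f : EuclideanSpace ℝ (Fin n) → ℝ) : Prop :=
  MemLp f (ENNReal.ofReal p) volume ∧ besovSeminorm n α p f < ⊤ ∧ Continuous f ∧
    ∃ N : Set (EuclideanSpace ℝ (Fin n)), IsOpen N ∧ E ⊆ N ∧ ∀ x ∈ N, 1 ≤ f x

noncomputable def besovCapacity (n : ℕ) (α p : ℝ)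
    (E : Set (EuclideanSpace ℝ (Fin n))) : ℝ≥0∞ :=
  ⨅ (f : EuclideanSpace ℝ (Fin n) → ℝ) (_ : besovAdmissible n α p E f),
    besovSeminorm n α p f ^ p

noncomputable def besovPerimeter (n : ℕ) (α p : ℝ)
    (E : Set (EuclideanSpace ℝ (Fin n))) : ℝ≥0∞ :=
  besovSeminorm n α p (E.indicator fun _ => (1 : ℝ))


lemma besovCapacity_mono (n : ℕ) (α p : ℝ) {E F : Set (EuclideanSpace ℝ (Fin n))}
    (hEF : E ⊆ F) : besovCapacity n α p E ≤ besovCapacity n α p F := by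
  refine le_iInf₂ fun f hf => ?_
  obtain ⟨h1, h2, h3, N, hN, hFN, hfN⟩ := hf
  exact iInf₂_le f ⟨h1, h2, h3, N, hN, hEF.trans hFN, hfN⟩

theorem besovCapacity_iInter_compacts (n : ℕ) (α p : ℝ)
    (hα : α ∈ Set.Ioo (0 : ℝ) 1) (hp : 1 ≤ p)
    (K : ℕ → Set (EuclideanSpace ℝ (Fin n)))
    (hK : ∀ j, IsCompact (K j)) (hmono : ∀ j, K (j + 1) ⊆ K j) :
    Filter.Tendsto (fun j => besovCapacity n α p (K j)) Filter.atTop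
      (nhds (besovCapacity n α p (⋂ j, K j))) := by
  have hanti : Antitone K := antitone_nat_of_succ_le hmono
  have key : besovCapacity n α p (⋂ j, K j) = ⨅ j, besovCapacity n α p (K j) := by
    refine le_antisymm (le_iInf fun j => besovCapacity_mono n α p (Set.iInter_subset K j)) ?_
    refine le_iInf₂ fun f hf => ?_
    obtain ⟨h1, h2, h3, N, hN, hKN, hfN⟩ := hf
    obtain ⟨j, hj⟩ : ∃ j, K 0 ∩ (K j \ N) = ∅ := by
      apply IsCompact.elim_directed_family_closed (hK 0) (fun j => K j \ N)
        (fun j => ((hK j).isClosed.sdiff hN))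
      · have : (⋂ i, K i \ N) = ∅ := by
          ext x
          simp only [Set.mem_iInter, Set.mem_diff, Set.mem_empty_iff_false, iff_false]
          intro h
          exact (h 0).2 (hKN (Set.mem_iInter.2 fun i => (h i).1))
        simp [this]
      · intro i j
        exact ⟨max i j, Set.diff_subset_diff_left (hanti (le_max_left i j)),
          Set.diff_subset_diff_left (hanti (le_max_right i j))⟩
    have hKjN : K j ⊆ N := by
      intro x hx
      by_contra hxN
      exact Set.eq_empty_iff_forall_notMem.1 hj x ⟨hanti (Nat.zero_le j) hx, hx, hxN⟩
    calc ⨅ i, besovCapacity n α p (K i) ≤ besovCapacity n α p (K j) := iInf_le _ j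
      _ ≤ besovSeminorm n α p f ^ p := iInf₂_le f ⟨h1, h2, h3, N, hN, hKjN, hfN⟩
  rw [key]
  exact tendsto_atTop_iInf fun i j hij => besovCapacity_mono n α p (hanti hij)
end

section
/- Let (α,p) ∈ (0,1)×[1,∞) and let f ∈ L^p(ℝⁿ). Then the co-area type inequality ‖ |f| ‖_{Λ̇_α^{p,∞}} ≤ ∫_0^∞ P_{α,p,∞}({ x ∈ ℝⁿ : |f(x)| > t }) dt holds. -/
open MeasureTheory ENNReal

section MinkowskiAux

lemma minkowski_aux {X : Type*} [MeasurableSpace X] (μ : Measure X) [SigmaFinite μ]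
    {p : ℝ} (hp : 1 ≤ p) (Ψ : X → ℝ≥0∞) (G : ℝ → X → ℝ≥0∞)
    (hΨ : Measurable Ψ) (hG : Measurable (Function.uncurry G))
    (hle : ∀ x, Ψ x ≤ ∫⁻ t in Set.Ioi (0:ℝ), G t x)
    (hfin : ∫⁻ x, Ψ x ^ p ∂μ ≠ ⊤) :
    (∫⁻ x, Ψ x ^ p ∂μ) ^ (1/p) ≤ ∫⁻ t in Set.Ioi (0:ℝ), (∫⁻ x, G t x ^ p ∂μ) ^ (1/p) := by
  have hGt : ∀ t, Measurable (G t) := fun t => hG.comp measurable_prodMk_left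
  rcases eq_or_lt_of_le hp with hp1 | hp1
  · simp only [← hp1, ENNReal.rpow_one, one_div_one]
    calc ∫⁻ x, Ψ x ∂μ ≤ ∫⁻ x, (∫⁻ t in Set.Ioi (0:ℝ), G t x) ∂μ := lintegral_mono hle
      _ = ∫⁻ t in Set.Ioi (0:ℝ), ∫⁻ x, G t x ∂μ :=
          lintegral_lintegral_swap (f := fun x t => G t x)
            ((hG.comp measurable_swap).aemeasurable)
  · have hpq := Real.HolderConjugate.conjExponent hp1
    set q := p.conjExponent with hq
    have hp0 : (0:ℝ) < p := by linarith
    set A := ∫⁻ x, Ψ x ^ p ∂μ with hA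
    set B := ∫⁻ t in Set.Ioi (0:ℝ), (∫⁻ x, G t x ^ p ∂μ) ^ (1/p) with hB
    have hAq_net : A ^ (1/q) ≠ ⊤ := ENNReal.rpow_ne_top_of_nonneg hpq.symm.one_div_nonneg hfin
    have key : A ≤ B * A ^ (1/q) := by
      have h1 : A = ∫⁻ x, Ψ x ^ (p-1) * Ψ x ∂μ := by
        apply lintegral_congr; intro x
        conv_lhs => rw [show p = (p-1)+1 by ring]
        rw [ENNReal.rpow_add_of_nonneg _ _ (by linarith) zero_le_one, ENNReal.rpow_one]
      have h3 : ∀ x, Ψ x ^ (p-1) * (∫⁻ t in Set.Ioi (0:ℝ), G t x) =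
          ∫⁻ t in Set.Ioi (0:ℝ), Ψ x ^ (p-1) * G t x := fun x =>
        (lintegral_const_mul _ (hG.comp (measurable_id.prodMk measurable_const))).symm
      have holder : ∀ t, ∫⁻ x, Ψ x ^ (p-1) * G t x ∂μ ≤
          (∫⁻ x, G t x ^ p ∂μ) ^ (1/p) * A ^ (1/q) := by
        intro t
        calc ∫⁻ x, Ψ x ^ (p-1) * G t x ∂μ = ∫⁻ x, (G t * fun x => Ψ x ^ (p-1)) x ∂μ := by
              apply lintegral_congr; intro x; simp [mul_comm]
          _ ≤ (∫⁻ x, G t x ^ p ∂μ) ^ (1/p) * (∫⁻ x, (Ψ x ^ (p-1)) ^ q ∂μ) ^ (1/q) :=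
              ENNReal.lintegral_mul_le_Lp_mul_Lq μ hpq (hGt t).aemeasurable
                (hΨ.pow_const _).aemeasurable
          _ = (∫⁻ x, G t x ^ p ∂μ) ^ (1/p) * A ^ (1/q) := by
              congr 1
              rw [hA]
              congr 1
              apply lintegral_congr; intro x
              rw [← ENNReal.rpow_mul, hpq.sub_one_mul_conj]
      calc A = ∫⁻ x, Ψ x ^ (p-1) * Ψ x ∂μ := h1
        _ ≤ ∫⁻ x, Ψ x ^ (p-1) * (∫⁻ t in Set.Ioi (0:ℝ), G t x) ∂μ :=
            lintegral_mono fun x => mul_le_mul_right (hle x) _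
        _ = ∫⁻ x, (∫⁻ t in Set.Ioi (0:ℝ), Ψ x ^ (p-1) * G t x) ∂μ := lintegral_congr h3
        _ = ∫⁻ t in Set.Ioi (0:ℝ), ∫⁻ x, Ψ x ^ (p-1) * G t x ∂μ := by
            apply lintegral_lintegral_swap (f := fun x t => Ψ x ^ (p-1) * G t x)
            exact (((hΨ.comp measurable_fst).pow_const _).mul
              (hG.comp measurable_swap)).aemeasurable
        _ ≤ ∫⁻ t in Set.Ioi (0:ℝ), (∫⁻ x, G t x ^ p ∂μ) ^ (1/p) * A ^ (1/q) :=
            lintegral_mono holder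
        _ = B * A ^ (1/q) := lintegral_mul_const' _ _ hAq_net
    by_cases hA0 : A = 0
    · rw [hA0, ENNReal.zero_rpow_of_pos (by positivity)]; exact zero_le
    · have hAq_ne0 : A ^ (1/q) ≠ 0 := by
        simp only [ne_eq, ENNReal.rpow_eq_zero_iff, not_or]
        constructor
        · rintro ⟨h, -⟩; exact hA0 h
        · rintro ⟨h, -⟩; exact hfin h
      rw [← ENNReal.mul_le_mul_iff_left hAq_ne0 hAq_net]
      calc A ^ (1/p) * A ^ (1/q)
          = A ^ (1/p + 1/q) :=
            (ENNReal.rpow_add_of_nonneg (1/p) (1/q) (by positivity)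
              hpq.symm.one_div_nonneg).symm
        _ = A := by
            rw [one_div, one_div, hpq.inv_add_inv_eq_one, ENNReal.rpow_one]
        _ ≤ B * A ^ (1/q) := key

lemma indicator_layer {a b : ℝ} (hb : 0 ≤ b) (hba : b ≤ a) :
    (‖a - b‖₊ : ℝ≥0∞) ≤ ∫⁻ t in Set.Ioi (0:ℝ),
      (‖(if t < a then (1:ℝ) else 0) - (if t < b then (1:ℝ) else 0)‖₊ : ℝ≥0∞) := by
  have hind : ∀ t : ℝ, (‖(if t < a then (1:ℝ) else 0) - (if t < b then (1:ℝ) else 0)‖₊ : ℝ≥0∞)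
      = (Set.Ico b a).indicator (fun _ => 1) t := by
    intro t
    by_cases h1 : t < b
    · simp [h1, lt_of_lt_of_le h1 hba, Set.indicator_apply, Set.mem_Ico, not_le.mpr h1]
    · by_cases h2 : t < a
      · simp [h1, h2, Set.indicator_apply, Set.mem_Ico, not_lt.mp h1]
      · simp [h1, h2, Set.indicator_apply, Set.mem_Ico]
  calc (‖a - b‖₊ : ℝ≥0∞) = ENNReal.ofReal (a - b) := Real.enorm_eq_ofReal (by linarith)
    _ = volume (Set.Ioo b a) := (Real.volume_Ioo).symm
    _ ≤ volume (Set.Ico b a ∩ Set.Ioi 0) :=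
        measure_mono fun t ht => ⟨⟨le_of_lt ht.1, ht.2⟩, lt_of_le_of_lt hb ht.1⟩
    _ = ∫⁻ t in Set.Ioi (0:ℝ), (Set.Ico b a).indicator (fun _ => 1) t := by
        rw [lintegral_indicator measurableSet_Ico, setLIntegral_one,
          Measure.restrict_apply measurableSet_Ico]
    _ = _ := lintegral_congr fun t => (hind t).symm

lemma indicator_layer' (a b : ℝ) (ha : 0 ≤ a) (hb : 0 ≤ b) :
    (‖a - b‖₊ : ℝ≥0∞) ≤ ∫⁻ t in Set.Ioi (0:ℝ),
      (‖(if t < a then (1:ℝ) else 0) - (if t < b then (1:ℝ) else 0)‖₊ : ℝ≥0∞) := by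
  rcases le_total b a with hba | hab
  · exact indicator_layer hb hba
  · calc (‖a - b‖₊ : ℝ≥0∞) = (‖b - a‖₊ : ℝ≥0∞) := by rw [← neg_sub, nnnorm_neg]
      _ ≤ ∫⁻ t in Set.Ioi (0:ℝ),
          (‖(if t < b then (1:ℝ) else 0) - (if t < a then (1:ℝ) else 0)‖₊ : ℝ≥0∞) :=
          indicator_layer ha hab
      _ = _ := lintegral_congr fun t => by rw [← neg_sub, nnnorm_neg]

end MinkowskiAux

lemma besovSeminorm_congr_ae {n : ℕ} {α p : ℝ} {u v : EuclideanSpace ℝ (Fin n) → ℝ}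
    (huv : u =ᵐ[volume] v) : besovSeminorm n α p u = besovSeminorm n α p v := by
  unfold besovSeminorm
  congr 1; ext h; congr 1; ext _
  congr 1
  apply eLpNorm_congr_ae
  have h2 : (fun x => u (x + h)) =ᵐ[volume] fun x => v (x + h) :=
    (measurePreserving_add_right volume h).quasiMeasurePreserving.ae_eq_comp huv
  exact h2.sub huv

theorem besov_coarea_inequality (n : ℕ) (α p : ℝ)
    (hα : α ∈ Set.Ioo (0 : ℝ) 1) (hp : 1 ≤ p)
    (f : EuclideanSpace ℝ (Fin n) → ℝ)
    (hf : MemLp f (ENNReal.ofReal p) volume) :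
    besovSeminorm n α p (fun x => |f x|) ≤
      ∫⁻ t in Set.Ioi (0 : ℝ), besovPerimeter n α p {x | t < |f x|} := by
  have hp0 : (0:ℝ) < p := lt_of_lt_of_le one_pos hp
  have hpe0 : (ENNReal.ofReal p) ≠ 0 := by
    simp [ENNReal.ofReal_eq_zero, not_le, hp0]
  have hpet : (ENNReal.ofReal p) ≠ ⊤ := ENNReal.ofReal_ne_top
  have hpetR : (ENNReal.ofReal p).toReal = p := ENNReal.toReal_ofReal hp0.le
  have hpe1 : (1:ℝ≥0∞) ≤ ENNReal.ofReal p := by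
    rw [← ENNReal.ofReal_one]; exact ENNReal.ofReal_le_ofReal hp
  -- pass to a measurable representative
  set g := hf.1.mk f with hgdef
  have hm : Measurable g := hf.1.stronglyMeasurable_mk.measurable
  have hfg : f =ᵐ[volume] g := hf.1.ae_eq_mk
  have hg : MemLp g (ENNReal.ofReal p) volume := hf.ae_eq hfg
  have hL : besovSeminorm n α p (fun x => |f x|) = besovSeminorm n α p (fun x => |g x|) :=
    besovSeminorm_congr_ae (hfg.mono fun x hx => by simp [hx])
  have hR : ∀ t : ℝ, besovPerimeter n α p {x | t < |f x|}
      = besovPerimeter n α p {x | t < |g x|} := fun t =>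
    besovSeminorm_congr_ae (hfg.mono fun x hx => by
      simp only [Set.indicator_apply, Set.mem_setOf_eq, hx])
  rw [hL]
  have main : besovSeminorm n α p (fun x => |g x|) ≤
      ∫⁻ t in Set.Ioi (0:ℝ), besovPerimeter n α p {x | t < |g x|} := by
    apply iSup_le; intro h
    apply iSup_le; intro hh
    have hmh : Measurable fun x : EuclideanSpace ℝ (Fin n) => g (x + h) :=
      hm.comp (measurable_add_const h)
    set Ψ : EuclideanSpace ℝ (Fin n) → ℝ≥0∞ :=
      fun x => (‖|g (x + h)| - |g x|‖₊ : ℝ≥0∞) with hΨdef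
    set G : ℝ → EuclideanSpace ℝ (Fin n) → ℝ≥0∞ := fun t x =>
      (‖({y | t < |g y|}).indicator (fun _ => (1:ℝ)) (x + h)
        - ({y | t < |g y|}).indicator (fun _ => (1:ℝ)) x‖₊ : ℝ≥0∞) with hGdef
    have hΨm : Measurable Ψ := (hmh.abs.sub hm.abs).enorm
    have hGm : Measurable (Function.uncurry G) := by
      apply Measurable.coe_nnreal_ennreal
      apply Measurable.nnnorm
      apply Measurable.sub
      · simp only [Set.indicator_apply, Set.mem_setOf_eq]
        exact Measurable.ite
          (measurableSet_lt measurable_fst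
            ((hm.comp ((measurable_add_const h).comp measurable_snd)).abs))
          measurable_const measurable_const
      · simp only [Set.indicator_apply, Set.mem_setOf_eq]
        exact Measurable.ite
          (measurableSet_lt measurable_fst ((hm.comp measurable_snd).abs))
          measurable_const measurable_const
    have hle : ∀ x, Ψ x ≤ ∫⁻ t in Set.Ioi (0:ℝ), G t x := by
      intro x
      refine (indicator_layer' |g (x + h)| |g x| (abs_nonneg _) (abs_nonneg _)).trans
        (le_of_eq (lintegral_congr fun t => ?_))
      simp only [hGdef, Set.indicator_apply, Set.mem_setOf_eq]
    have hD : MemLp (fun x => |g (x + h)| - |g x|) (ENNReal.ofReal p) volume := by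
      have h1 : MemLp (fun x => |g x|) (ENNReal.ofReal p) volume := by
        simpa [Real.norm_eq_abs] using hg.norm
      have h2 : MemLp (fun x => |g (x + h)|) (ENNReal.ofReal p) volume :=
        h1.comp_measurePreserving (measurePreserving_add_right volume h)
      exact h2.sub h1
    have hfin : ∫⁻ x, Ψ x ^ p ≠ ⊤ := by
      have hlt := hD.eLpNorm_lt_top
      rw [eLpNorm_eq_lintegral_rpow_enorm_toReal hpe0 hpet, hpetR] at hlt
      intro h'
      change (∫⁻ x, Ψ x ^ p) ^ (1/p) < ⊤ at hlt
      rw [h'] at hlt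
      simp [ENNReal.top_rpow_of_pos (show (0:ℝ) < p⁻¹ by positivity)] at hlt
    have key := minkowski_aux volume hp Ψ G hΨm hGm hle hfin
    calc ENNReal.ofReal (‖h‖ ^ (-α)) *
          eLpNorm (fun x => |g (x + h)| - |g x|) (ENNReal.ofReal p) volume
        = ENNReal.ofReal (‖h‖ ^ (-α)) * (∫⁻ x, Ψ x ^ p) ^ (1/p) := by
          rw [eLpNorm_eq_lintegral_rpow_enorm_toReal hpe0 hpet, hpetR]; rfl
      _ ≤ ENNReal.ofReal (‖h‖ ^ (-α)) *
            ∫⁻ t in Set.Ioi (0:ℝ), (∫⁻ x, G t x ^ p) ^ (1/p) := mul_le_mul_right key _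
      _ = ∫⁻ t in Set.Ioi (0:ℝ), ENNReal.ofReal (‖h‖ ^ (-α)) * (∫⁻ x, G t x ^ p) ^ (1/p) :=
          (lintegral_const_mul' _ _ ENNReal.ofReal_ne_top).symm
      _ ≤ ∫⁻ t in Set.Ioi (0:ℝ), besovPerimeter n α p {x | t < |g x|} := by
          apply lintegral_mono; intro t
          dsimp only
          have heq : (∫⁻ x, G t x ^ p) ^ (1/p) =
              eLpNorm (fun x => ({y | t < |g y|}).indicator (fun _ => (1:ℝ)) (x + h)
                - ({y | t < |g y|}).indicator (fun _ => (1:ℝ)) x) (ENNReal.ofReal p) volume := by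
            rw [eLpNorm_eq_lintegral_rpow_enorm_toReal hpe0 hpet, hpetR]; rfl
          rw [heq]
          unfold besovPerimeter besovSeminorm
          exact le_iSup_of_le h (le_iSup_of_le hh le_rfl)
  exact main.trans (le_of_eq (lintegral_congr fun t => (hR t).symm))
end

section
/- Let (α,p) ∈ (0,1)×[1,∞). For every Euclidean ball B(x₀,r₀) ⊆ ℝⁿ with center x₀ and radius r₀ > 0, C_{α,p,∞}(B(x₀,r₀)) = r₀^{n−αp} · C_{α,p,∞}(𝔹ⁿ), where 𝔹ⁿ is the open unit ball of ℝⁿ. -/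
open MeasureTheory ENNReal

/-! ### Auxiliary lemmas -/

section Aux

variable {n : ℕ}

/-- `eLpNorm` of a composition with an affine dilation `x ↦ c • x + v`, `c > 0`. -/
lemma eLpNorm_comp_affine {p : ℝ} (hp : 1 ≤ p) {c : ℝ} (hc : 0 < c)
    (v : EuclideanSpace ℝ (Fin n)) {f : EuclideanSpace ℝ (Fin n) → ℝ} (hf : Continuous f) :
    eLpNorm (fun x => f (c • x + v)) (ENNReal.ofReal p) volume
      = ENNReal.ofReal (c ^ (-((n : ℝ) / p))) * eLpNorm f (ENNReal.ofReal p) volume := by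
  have hp0 : (0 : ℝ) < p := lt_of_lt_of_le one_pos hp
  set q : ℝ≥0∞ := ENNReal.ofReal p with hq
  have hq0 : q ≠ 0 := by simp [hq, ENNReal.ofReal_eq_zero, not_le, hp0]
  have hqt : q ≠ ⊤ := ENNReal.ofReal_ne_top
  -- the translated function
  set g : EuclideanSpace ℝ (Fin n) → ℝ := fun y => f (y + v) with hgdef
  have hg : Continuous g := hf.comp (continuous_id.add continuous_const)
  -- translation invariance
  have htrans : eLpNorm g q volume = eLpNorm f q volume := by
    have := eLpNorm_comp_measurePreserving (p := q) (μ := volume) (ν := volume)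
      hf.aestronglyMeasurable (measurePreserving_add_right volume v)
    simpa [hgdef, Function.comp_def] using this
  -- dilation
  have hmap : Measure.map (c • ·) (volume : Measure (EuclideanSpace ℝ (Fin n)))
      = ENNReal.ofReal (abs (c ^ Module.finrank ℝ (EuclideanSpace ℝ (Fin n)))⁻¹) • volume :=
    Measure.map_addHaar_smul volume hc.ne'
  have hsmulmeas : Continuous fun x : EuclideanSpace ℝ (Fin n) => c • x :=
    continuous_const_smul c
  have hgm : AEStronglyMeasurable g (Measure.map (c • ·) volume) := by
    rw [hmap]
    exact hg.aestronglyMeasurable.mono_ac (Measure.smul_absolutelyContinuous)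
  have hdil : eLpNorm (fun x => g (c • x)) q volume
      = ENNReal.ofReal (abs (c ^ Module.finrank ℝ (EuclideanSpace ℝ (Fin n)))⁻¹) ^ (1 / q).toReal
          * eLpNorm g q volume := by
    have h1 : eLpNorm (g ∘ (c • ·)) q volume = eLpNorm g q (Measure.map (c • ·) volume) :=
      (eLpNorm_map_measure hgm hsmulmeas.measurable.aemeasurable).symm
    have h2 := eLpNorm_smul_measure_of_ne_top (μ := (volume : Measure (EuclideanSpace ℝ (Fin n))))
      (p := q) hqt g (ENNReal.ofReal (abs (c ^ Module.finrank ℝ (EuclideanSpace ℝ (Fin n)))⁻¹))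
    calc eLpNorm (fun x => g (c • x)) q volume = eLpNorm (g ∘ (c • ·)) q volume := rfl
      _ = eLpNorm g q (Measure.map (c • ·) volume) := h1
      _ = _ := by rw [hmap, h2, smul_eq_mul]
  -- identify the constant
  have hcn : (0 : ℝ) < c ^ Module.finrank ℝ (EuclideanSpace ℝ (Fin n)) := pow_pos hc _
  have hconst : ENNReal.ofReal (abs (c ^ Module.finrank ℝ (EuclideanSpace ℝ (Fin n)))⁻¹)
        ^ (1 / q).toReal = ENNReal.ofReal (c ^ (-((n : ℝ) / p))) := by
    rw [abs_of_pos (by positivity), finrank_euclideanSpace_fin]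
    have hqr : (1 / q).toReal = p⁻¹ := by
      rw [one_div, ENNReal.toReal_inv, hq, ENNReal.toReal_ofReal hp0.le]
    rw [hqr, ENNReal.ofReal_rpow_of_pos (by positivity)]
    congr 1
    rw [← Real.rpow_natCast c n, ← Real.rpow_neg hc.le, ← Real.rpow_mul hc.le]
    congr 1
    field_simp
  have heq : (fun x => f (c • x + v)) = fun x => g (c • x) := by
    funext x; simp [hgdef]
  rw [heq, hdil, hconst, htrans]

/-- Scaling of the Besov seminorm under `x ↦ c • x + v`. -/
lemma besovSeminorm_comp_affine {α p : ℝ} (hp : 1 ≤ p) {c : ℝ} (hc : 0 < c)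
    (v : EuclideanSpace ℝ (Fin n)) {f : EuclideanSpace ℝ (Fin n) → ℝ} (hf : Continuous f) :
    besovSeminorm n α p (fun x => f (c • x + v))
      = ENNReal.ofReal (c ^ (α - (n : ℝ) / p)) * besovSeminorm n α p f := by
  set q : ℝ≥0∞ := ENNReal.ofReal p with hq
  set F : EuclideanSpace ℝ (Fin n) → ℝ≥0∞ := fun k =>
    ENNReal.ofReal (‖k‖ ^ (-α)) * eLpNorm (fun x => f (x + k) - f x) q volume with hF
  have key : ∀ h : EuclideanSpace ℝ (Fin n), h ≠ 0 →
      ENNReal.ofReal (‖h‖ ^ (-α)) *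
        eLpNorm (fun x => f (c • x + v + c • h) - f (c • x + v)) q volume
      = ENNReal.ofReal (c ^ (α - (n : ℝ) / p)) * F (c • h) := by
    intro h hh
    have hD : Continuous fun y : EuclideanSpace ℝ (Fin n) => f (y + c • h) - f y :=
      (hf.comp (continuous_id.add continuous_const)).sub hf
    have hdil := eLpNorm_comp_affine (n := n) hp hc v hD
    have h1 : (fun x => f (c • x + v + c • h) - f (c • x + v))
        = fun x => (fun y => f (y + c • h) - f y) (c • x + v) := rfl
    rw [h1, hdil]
    -- now the norm factor
    have hnh : (0 : ℝ) < ‖h‖ := norm_pos_iff.mpr hh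
    have hnch : ‖c • h‖ = c * ‖h‖ := by
      rw [norm_smul, Real.norm_eq_abs, abs_of_pos hc]
    have hnorm : ‖h‖ ^ (-α) = c ^ α * ‖c • h‖ ^ (-α) := by
      rw [hnch, Real.mul_rpow hc.le hnh.le, ← mul_assoc, ← Real.rpow_add hc]
      simp
    rw [hF]
    simp only []
    rw [hnorm, ENNReal.ofReal_mul (by positivity)]
    rw [show α - (n : ℝ) / p = α + (-((n : ℝ) / p)) by ring, Real.rpow_add hc,
      ENNReal.ofReal_mul (by positivity)]
    ring
  have hiff : ∀ h : EuclideanSpace ℝ (Fin n), (c • h ≠ 0) = (h ≠ 0) := by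
    intro h
    simp [smul_eq_zero, hc.ne']
  calc besovSeminorm n α p (fun x => f (c • x + v))
      = ⨆ (h : EuclideanSpace ℝ (Fin n)) (_ : h ≠ 0),
          ENNReal.ofReal (c ^ (α - (n : ℝ) / p)) * F (c • h) := by
        rw [besovSeminorm]
        refine iSup_congr fun h => iSup_congr fun hh => ?_
        have : (fun x => f (c • (x + h) + v) - f (c • x + v))
            = fun x => f (c • x + v + c • h) - f (c • x + v) := by
          funext x
          have e : c • (x + h) + v = c • x + v + c • h := by rw [smul_add]; abel
          rw [e]
        rw [this, key h hh]
    _ = ENNReal.ofReal (c ^ (α - (n : ℝ) / p)) *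
          ⨆ (h : EuclideanSpace ℝ (Fin n)) (_ : h ≠ 0), F (c • h) := by
        simp_rw [ENNReal.mul_iSup]
    _ = ENNReal.ofReal (c ^ (α - (n : ℝ) / p)) *
          ⨆ (k : EuclideanSpace ℝ (Fin n)) (_ : k ≠ 0), F k := by
        congr 1
        have hsurj : Function.Surjective fun h : EuclideanSpace ℝ (Fin n) => c • h := by
          intro k
          exact ⟨c⁻¹ • k, by show c • c⁻¹ • k = k
                             rw [smul_smul, mul_inv_cancel₀ hc.ne', one_smul]⟩
        calc (⨆ (h : EuclideanSpace ℝ (Fin n)) (_ : h ≠ 0), F (c • h))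
            = ⨆ (h : EuclideanSpace ℝ (Fin n)) (_ : c • h ≠ 0), F (c • h) := by
              simp_rw [hiff]
          _ = ⨆ (k : EuclideanSpace ℝ (Fin n)) (_ : k ≠ 0), F k :=
              hsurj.iSup_comp (g := fun k => ⨆ (_ : k ≠ 0), F k)
    _ = _ := by rw [besovSeminorm]

lemma besovAdmissible_comp_affine {α p : ℝ} (hp : 1 ≤ p) {c : ℝ} (hc : 0 < c)
    (v : EuclideanSpace ℝ (Fin n)) {A : Set (EuclideanSpace ℝ (Fin n))}
    {f : EuclideanSpace ℝ (Fin n) → ℝ} (hfa : besovAdmissible n α p A f) :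
    besovAdmissible n α p ((fun x => c • x + v) ⁻¹' A) (fun x => f (c • x + v)) := by
  obtain ⟨hmem, hsem, hcont, N, hNopen, hAN, hN1⟩ := hfa
  have hT : Continuous fun x : EuclideanSpace ℝ (Fin n) => c • x + v :=
    (continuous_const_smul c).add continuous_const
  refine ⟨?_, ?_, hcont.comp hT, (fun x => c • x + v) ⁻¹' N, hNopen.preimage hT,
    Set.preimage_mono hAN, fun x hx => hN1 _ hx⟩
  · refine ⟨(hcont.comp hT).aestronglyMeasurable, ?_⟩
    rw [eLpNorm_comp_affine hp hc v hcont]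
    exact ENNReal.mul_lt_top ENNReal.ofReal_lt_top hmem.2
  · rw [besovSeminorm_comp_affine hp hc v hcont]
    exact ENNReal.mul_lt_top ENNReal.ofReal_lt_top hsem

lemma besovCapacity_preimage_le {α p : ℝ} (hα : 0 < α) (hp : 1 ≤ p) {c : ℝ} (hc : 0 < c)
    (v : EuclideanSpace ℝ (Fin n)) (A : Set (EuclideanSpace ℝ (Fin n))) :
    besovCapacity n α p ((fun x => c • x + v) ⁻¹' A)
      ≤ ENNReal.ofReal (c ^ (α * p - (n : ℝ))) * besovCapacity n α p A := by
  have hp0 : (0 : ℝ) < p := lt_of_lt_of_le one_pos hp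
  have h0 : ENNReal.ofReal (c ^ (α * p - (n : ℝ))) ≠ 0 := by
    simp [ENNReal.ofReal_eq_zero, not_le, Real.rpow_pos_of_pos hc]
  have hrhs : ENNReal.ofReal (c ^ (α * p - (n : ℝ))) * besovCapacity n α p A
      = ⨅ (f : EuclideanSpace ℝ (Fin n) → ℝ) (_ : besovAdmissible n α p A f),
          ENNReal.ofReal (c ^ (α * p - (n : ℝ))) * besovSeminorm n α p f ^ p := by
    rw [besovCapacity, ENNReal.mul_iInf_of_ne h0 ENNReal.ofReal_ne_top]
    exact iInf_congr fun f => ENNReal.mul_iInf_of_ne h0 ENNReal.ofReal_ne_top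
  rw [hrhs]
  refine le_iInf₂ fun f hfa => ?_
  calc besovCapacity n α p ((fun x => c • x + v) ⁻¹' A)
      ≤ besovSeminorm n α p (fun x => f (c • x + v)) ^ p :=
        iInf₂_le _ (besovAdmissible_comp_affine hp hc v hfa)
    _ = (ENNReal.ofReal (c ^ (α - (n : ℝ) / p)) * besovSeminorm n α p f) ^ p := by
        rw [besovSeminorm_comp_affine hp hc v hfa.2.2.1]
    _ = ENNReal.ofReal (c ^ (α - (n : ℝ) / p)) ^ p * besovSeminorm n α p f ^ p :=
        ENNReal.mul_rpow_of_nonneg _ _ hp0.le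
    _ = ENNReal.ofReal (c ^ (α * p - (n : ℝ))) * besovSeminorm n α p f ^ p := by
        rw [ENNReal.ofReal_rpow_of_pos (Real.rpow_pos_of_pos hc _), ← Real.rpow_mul hc.le]
        congr 2
        field_simp

end Aux

theorem besovCapacity_ball (n : ℕ) (α p : ℝ)
    (hα : α ∈ Set.Ioo (0 : ℝ) 1) (hp : 1 ≤ p)
    (x₀ : EuclideanSpace ℝ (Fin n)) (r₀ : ℝ) (hr₀ : 0 < r₀) :
    besovCapacity n α p (Metric.ball x₀ r₀) =
      ENNReal.ofReal (r₀ ^ ((n : ℝ) - α * p)) *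
        besovCapacity n α p (Metric.ball (0 : EuclideanSpace ℝ (Fin n)) 1) := by
  have hr₀' : (0 : ℝ) < r₀⁻¹ := inv_pos.mpr hr₀
  -- preimage identities
  have hset1 : (fun x : EuclideanSpace ℝ (Fin n) => r₀⁻¹ • x + (-(r₀⁻¹ • x₀))) ⁻¹'
      Metric.ball (0 : EuclideanSpace ℝ (Fin n)) 1 = Metric.ball x₀ r₀ := by
    ext x
    simp only [Set.mem_preimage, Metric.mem_ball, dist_zero_right, dist_eq_norm]
    have e : r₀⁻¹ • x + -(r₀⁻¹ • x₀) = r₀⁻¹ • (x - x₀) := by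
      rw [smul_sub, sub_eq_add_neg]
    rw [e, sub_zero, norm_smul, Real.norm_eq_abs, abs_of_pos hr₀']
    rw [inv_mul_lt_iff₀ hr₀, mul_one]
  have hset2 : (fun x : EuclideanSpace ℝ (Fin n) => r₀ • x + x₀) ⁻¹'
      Metric.ball x₀ r₀ = Metric.ball (0 : EuclideanSpace ℝ (Fin n)) 1 := by
    ext x
    simp only [Set.mem_preimage, Metric.mem_ball, dist_zero_right, dist_eq_norm,
      add_sub_cancel_right, sub_zero]
    rw [norm_smul, Real.norm_eq_abs, abs_of_pos hr₀]
    exact mul_lt_iff_lt_one_right hr₀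
  have key1 := besovCapacity_preimage_le (n := n) hα.1 hp hr₀' (-(r₀⁻¹ • x₀))
    (Metric.ball (0 : EuclideanSpace ℝ (Fin n)) 1)
  have key2 := besovCapacity_preimage_le (n := n) hα.1 hp hr₀ x₀ (Metric.ball x₀ r₀)
  rw [hset1] at key1
  rw [hset2] at key2
  have hinv : (r₀⁻¹ : ℝ) ^ (α * p - (n : ℝ)) = r₀ ^ ((n : ℝ) - α * p) := by
    rw [← Real.rpow_neg_one r₀, ← Real.rpow_mul hr₀.le]
    ring_nf
  rw [hinv] at key1
  refine le_antisymm key1 ?_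
  have hmul : ENNReal.ofReal (r₀ ^ ((n : ℝ) - α * p)) *
      ENNReal.ofReal (r₀ ^ (α * p - (n : ℝ))) = 1 := by
    rw [← ENNReal.ofReal_mul (by positivity), ← Real.rpow_add hr₀]
    norm_num
  calc ENNReal.ofReal (r₀ ^ ((n : ℝ) - α * p)) *
        besovCapacity n α p (Metric.ball (0 : EuclideanSpace ℝ (Fin n)) 1)
      ≤ ENNReal.ofReal (r₀ ^ ((n : ℝ) - α * p)) *
          (ENNReal.ofReal (r₀ ^ (α * p - (n : ℝ))) * besovCapacity n α p (Metric.ball x₀ r₀)) :=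
        mul_le_mul_right key2 _
    _ = (ENNReal.ofReal (r₀ ^ ((n : ℝ) - α * p)) * ENNReal.ofReal (r₀ ^ (α * p - (n : ℝ)))) *
          besovCapacity n α p (Metric.ball x₀ r₀) := by ring
    _ = besovCapacity n α p (Metric.ball x₀ r₀) := by rw [hmul, one_mul]
end

section
/- Let α ∈ (0,1), p ∈ [1, n/α), q ∈ [1,∞), and let μ be a nonnegative outer measure on ℝⁿ. Then the following are equivalent: (1) there is a constant c > 0 such that sup_{t>0} ( t^q μ({ x ∈ ℝⁿ : |f(x)| > t }) )^{1/q} ≤ c ‖f‖_{Λ̇_α^{p,∞}} for every f ∈ Λ_α^{p,∞} ∩ C(ℝⁿ); (2) there is a constant c > 0 such that μ(E) ≤ c ( C_{α,p,∞}(E) )^{q/p} for every Borel set E ⊆ ℝⁿ. -/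
open MeasureTheory ENNReal

lemma besovSeminorm_inv_abs_le (n : ℕ) (α p : ℝ) (t : ℝ) (ht : 0 < t)
    (f : EuclideanSpace ℝ (Fin n) → ℝ) :
    besovSeminorm n α p (fun x => t⁻¹ * |f x|) ≤
      ENNReal.ofReal t⁻¹ * besovSeminorm n α p f := by
  apply iSup₂_le
  intro h hh
  have key : eLpNorm (fun x => t⁻¹ * |f (x + h)| - t⁻¹ * |f x|) (ENNReal.ofReal p) volume ≤
      ENNReal.ofReal t⁻¹ * eLpNorm (fun x => f (x + h) - f x) (ENNReal.ofReal p) volume := by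
    have h1 : (fun x => t⁻¹ * |f (x + h)| - t⁻¹ * |f x|) =
        (t⁻¹ • fun x : EuclideanSpace ℝ (Fin n) => |f (x + h)| - |f x|) := by
      funext x; simp [mul_sub]
    rw [h1, eLpNorm_const_smul]
    rw [Real.enorm_eq_ofReal (by positivity)]
    gcongr
    apply eLpNorm_mono
    intro x
    simp only [Real.norm_eq_abs]
    exact abs_abs_sub_abs_le_abs_sub _ _
  calc ENNReal.ofReal (‖h‖ ^ (-α)) *
        eLpNorm (fun x => t⁻¹ * |f (x + h)| - t⁻¹ * |f x|) (ENNReal.ofReal p) volume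
      ≤ ENNReal.ofReal (‖h‖ ^ (-α)) *
        (ENNReal.ofReal t⁻¹ * eLpNorm (fun x => f (x + h) - f x) (ENNReal.ofReal p) volume) := by
        gcongr
    _ = ENNReal.ofReal t⁻¹ * (ENNReal.ofReal (‖h‖ ^ (-α)) *
        eLpNorm (fun x => f (x + h) - f x) (ENNReal.ofReal p) volume) := by ring
    _ ≤ ENNReal.ofReal t⁻¹ * besovSeminorm n α p f := by
        gcongr
        exact le_iSup₂ (f := fun (h : EuclideanSpace ℝ (Fin n)) (_ : h ≠ 0) =>
          ENNReal.ofReal (‖h‖ ^ (-α)) *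
            eLpNorm (fun x => f (x + h) - f x) (ENNReal.ofReal p) volume) h hh

theorem besov_trace_iff_capacity_bound (n : ℕ) (α p q : ℝ)
    (hα : α ∈ Set.Ioo (0 : ℝ) 1) (hp : 1 ≤ p) (hpn : p < (n : ℝ) / α) (hq : 1 ≤ q)
    (μ : MeasureTheory.OuterMeasure (EuclideanSpace ℝ (Fin n))) :
    (∃ c : ℝ, 0 < c ∧ ∀ f : EuclideanSpace ℝ (Fin n) → ℝ,
        MemLp f (ENNReal.ofReal p) volume → besovSeminorm n α p f < ⊤ → Continuous f →
        (⨆ (t : ℝ) (_ : 0 < t), (ENNReal.ofReal t ^ q * μ {x | t < |f x|}) ^ (1 / q)) ≤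
          ENNReal.ofReal c * besovSeminorm n α p f) ↔
    (∃ c : ℝ, 0 < c ∧ ∀ E : Set (EuclideanSpace ℝ (Fin n)), MeasurableSet E →
        μ E ≤ ENNReal.ofReal c * besovCapacity n α p E ^ (q / p)) := by
  have hp0 : (0 : ℝ) < p := lt_of_lt_of_le one_pos hp
  have hq0 : (0 : ℝ) < q := lt_of_lt_of_le one_pos hq
  have hqp0 : (0 : ℝ) < q / p := div_pos hq0 hp0
  constructor
  · -- (1) → (2)
    rintro ⟨c, hc, htrace⟩
    refine ⟨(2 * c) ^ q, by positivity, ?_⟩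
    intro E _
    -- reduce to: for each admissible f, μ E ≤ ofReal ((2c)^q) * (S^p)^(q/p)
    have key : ∀ f : EuclideanSpace ℝ (Fin n) → ℝ, besovAdmissible n α p E f →
        μ E ≤ ENNReal.ofReal ((2 * c) ^ q) *
          (besovSeminorm n α p f ^ p) ^ (q / p) := by
      intro f ⟨hmem, hS, hcont, N, hNopen, hEN, hfN⟩
      set S := besovSeminorm n α p f with hSdef
      have h1 := htrace f hmem hS hcont
      have h2 : (ENNReal.ofReal (1/2) ^ q * μ {x | 1/2 < |f x|}) ^ (1 / q) ≤
          ENNReal.ofReal c * S := by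
        refine le_trans ?_ h1
        exact le_iSup₂ (f := fun (t : ℝ) (_ : 0 < t) =>
          (ENNReal.ofReal t ^ q * μ {x | t < |f x|}) ^ (1 / q)) (1/2) (by norm_num)
      have hEsub : μ E ≤ μ {x | 1/2 < |f x|} := by
        apply μ.mono
        intro x hx
        have h3 : 1 ≤ f x := hfN x (hEN hx)
        have : (1 : ℝ) ≤ |f x| := le_trans h3 (le_abs_self _)
        simpa using lt_of_lt_of_le (by norm_num : (1:ℝ)/2 < 1) this
      -- raise h2 to power q
      have h4 : ENNReal.ofReal (1/2) ^ q * μ {x | 1/2 < |f x|} ≤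
          (ENNReal.ofReal c * S) ^ q := by
        have := ENNReal.rpow_le_rpow h2 hq0.le
        rwa [← ENNReal.rpow_mul, one_div_mul_cancel hq0.ne', ENNReal.rpow_one] at this
      have h5 : ENNReal.ofReal (1/2) ^ q * μ E ≤ (ENNReal.ofReal c * S) ^ q :=
        le_trans (by gcongr) h4
      have hhalf : ENNReal.ofReal 2 ^ q * ENNReal.ofReal (1/2) ^ q = 1 := by
        rw [← ENNReal.mul_rpow_of_nonneg _ _ hq0.le, ← ENNReal.ofReal_mul (by norm_num)]
        norm_num
      calc μ E = (ENNReal.ofReal 2 ^ q * ENNReal.ofReal (1/2) ^ q) * μ E := by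
            rw [hhalf, one_mul]
        _ = ENNReal.ofReal 2 ^ q * (ENNReal.ofReal (1/2) ^ q * μ E) := by ring
        _ ≤ ENNReal.ofReal 2 ^ q * (ENNReal.ofReal c * S) ^ q := by gcongr
        _ = ENNReal.ofReal ((2 * c) ^ q) * S ^ q := by
            rw [ENNReal.mul_rpow_of_nonneg _ _ hq0.le, ← mul_assoc,
              ← ENNReal.mul_rpow_of_nonneg _ _ hq0.le, ← ENNReal.ofReal_mul (by norm_num),
              ← ENNReal.ofReal_rpow_of_pos (by positivity)]
        _ = ENNReal.ofReal ((2 * c) ^ q) * (S ^ p) ^ (q / p) := by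
            rw [← ENNReal.rpow_mul, mul_div_cancel₀ q hp0.ne']
    -- now pass to the infimum
    rw [besovCapacity]
    rw [show ((⨅ (f : EuclideanSpace ℝ (Fin n) → ℝ) (_ : besovAdmissible n α p E f),
        besovSeminorm n α p f ^ p) ^ (q / p)) =
        ⨅ (f : EuclideanSpace ℝ (Fin n) → ℝ) (_ : besovAdmissible n α p E f),
          (besovSeminorm n α p f ^ p) ^ (q / p) from by
      rw [← ENNReal.orderIsoRpow_apply (q/p) hqp0]
      rw [OrderIso.map_iInf]
      exact iInf_congr fun f => OrderIso.map_iInf _ _]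
    rw [ENNReal.mul_iInf_of_ne (ENNReal.ofReal_pos.mpr (by positivity)).ne'
      ENNReal.ofReal_ne_top]
    refine le_iInf fun f => ?_
    rw [ENNReal.mul_iInf_of_ne (ENNReal.ofReal_pos.mpr (by positivity)).ne'
      ENNReal.ofReal_ne_top]
    exact le_iInf fun hf => key f hf
  · -- (2) → (1)
    rintro ⟨c, hc, hcap⟩
    refine ⟨c ^ (1/q), by positivity, ?_⟩
    intro f hmem hS hcont
    set S := besovSeminorm n α p f with hSdef
    apply iSup₂_le
    intro t ht
    set E : Set (EuclideanSpace ℝ (Fin n)) := {x | t < |f x|} with hEdef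
    have hEopen : IsOpen E := isOpen_lt continuous_const (continuous_abs.comp hcont)
    set g : EuclideanSpace ℝ (Fin n) → ℝ := fun x => t⁻¹ * |f x| with hgdef
    have hgS : besovSeminorm n α p g ≤ ENNReal.ofReal t⁻¹ * S :=
      besovSeminorm_inv_abs_le n α p t ht f
    have hadm : besovAdmissible n α p E g := by
      refine ⟨(hmem.abs).const_mul t⁻¹, ?_, continuous_const.mul hcont.abs, E, hEopen,
        subset_rfl, ?_⟩
      · exact lt_of_le_of_lt hgS (ENNReal.mul_lt_top ENNReal.ofReal_lt_top hS)
      · intro x hx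
        have hx' : t < |f x| := hx
        calc (1:ℝ) = t⁻¹ * t := (inv_mul_cancel₀ ht.ne').symm
          _ ≤ t⁻¹ * |f x| := mul_le_mul_of_nonneg_left hx'.le (inv_nonneg.mpr ht.le)
    have hcapE : besovCapacity n α p E ≤ (ENNReal.ofReal t⁻¹ * S) ^ p := by
      refine le_trans (iInf₂_le g hadm) ?_
      exact ENNReal.rpow_le_rpow hgS hp0.le
    have h6 : μ E ≤ ENNReal.ofReal c * (ENNReal.ofReal t⁻¹ ^ q * S ^ q) := by
      refine le_trans (hcap E hEopen.measurableSet) ?_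
      have : besovCapacity n α p E ^ (q / p) ≤ ((ENNReal.ofReal t⁻¹ * S) ^ p) ^ (q / p) :=
        ENNReal.rpow_le_rpow hcapE hqp0.le
      rw [← ENNReal.rpow_mul, mul_div_cancel₀ q hp0.ne',
        ENNReal.mul_rpow_of_nonneg _ _ hq0.le] at this
      gcongr
    have h7 : ENNReal.ofReal t ^ q * μ E ≤ ENNReal.ofReal c * S ^ q := by
      calc ENNReal.ofReal t ^ q * μ E
          ≤ ENNReal.ofReal t ^ q * (ENNReal.ofReal c * (ENNReal.ofReal t⁻¹ ^ q * S ^ q)) := by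
            gcongr
        _ = ENNReal.ofReal c * ((ENNReal.ofReal t ^ q * ENNReal.ofReal t⁻¹ ^ q) * S ^ q) := by
            ring
        _ = ENNReal.ofReal c * S ^ q := by
            rw [← ENNReal.mul_rpow_of_nonneg _ _ hq0.le, ← ENNReal.ofReal_mul ht.le,
              mul_inv_cancel₀ ht.ne']
            simp
    calc (ENNReal.ofReal t ^ q * μ E) ^ (1/q) ≤ (ENNReal.ofReal c * S ^ q) ^ (1/q) :=
          ENNReal.rpow_le_rpow h7 (by positivity)
      _ = ENNReal.ofReal (c ^ (1/q)) * S := by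
          rw [ENNReal.mul_rpow_of_nonneg _ _ (by positivity), ← ENNReal.rpow_mul,
            mul_one_div, div_self hq0.ne', ENNReal.rpow_one,
            ENNReal.ofReal_rpow_of_pos hc]
end

section
/- Let α ∈ (0,1), p ∈ [1, n/α), q ∈ [1,∞), let μ be a nonnegative outer measure on ℝⁿ, and let 𝗆 : ℝⁿ → ℝ be a Borel function. Then: (a) if 𝗆 is μ-essentially bounded (𝗆 ∈ L^∞_μ) and there is a constant c > 0 with μ(E) ≤ c ( C_{α,p,∞}(E) )^{q/p} for every Borel set E ⊆ ℝⁿ, then there is a constant c' > 0 such that ‖𝗆 f‖_{L^{q,∞}_μ} ≤ c' ‖f‖_{Λ̇_α^{p,∞}} for every f ∈ Λ_α^{p,∞} ∩ C(ℝⁿ); and (b) if there is a constant c > 0 such that ‖𝗆 f‖_{L^{q,∞}_μ} ≤ c ‖f‖_{Λ̇_α^{p,∞}} for every f ∈ Λ_α^{p,∞} ∩ C(ℝⁿ), then there is a constant c' > 0 such that sup_{t>0} t^q μ({ x ∈ E : |𝗆(x)| > t }) ≤ c' ( C_{α,p,∞}(E) )^{q/p} for every Borel set E ⊆ ℝⁿ.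 -/
open MeasureTheory ENNReal

lemma my_rpow_iInf {ι : Sort*} (f : ι → ℝ≥0∞) {r : ℝ} (hr : 0 < r) :
    (⨅ i, f i) ^ r = ⨅ i, f i ^ r :=
  map_iInf (ENNReal.orderIsoRpow r hr) f

lemma besov_smul_abs_le (n : ℕ) (α p : ℝ) (a : ℝ) (ha : 0 ≤ a)
    (f : EuclideanSpace ℝ (Fin n) → ℝ) :
    besovSeminorm n α p (fun x => a * |f x|) ≤ ENNReal.ofReal a * besovSeminorm n α p f := by
  simp only [besovSeminorm]
  refine iSup₂_le fun h hh => ?_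
  have key : eLpNorm (fun x : EuclideanSpace ℝ (Fin n) => a * |f (x + h)| - a * |f x|)
      (ENNReal.ofReal p) volume ≤
      ENNReal.ofReal a * eLpNorm (fun x => f (x + h) - f x) (ENNReal.ofReal p) volume := by
    have e1 : (fun x : EuclideanSpace ℝ (Fin n) => a * |f (x + h)| - a * |f x|)
        = a • (fun x : EuclideanSpace ℝ (Fin n) => |f (x + h)| - |f x|) := by
      funext x; simp [mul_sub]
    rw [e1, eLpNorm_const_smul, Real.enorm_eq_ofReal ha]
    gcongr
    exact eLpNorm_mono fun x => by
      simp only [Real.norm_eq_abs]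
      exact abs_abs_sub_abs_le_abs_sub _ _
  calc ENNReal.ofReal (‖h‖ ^ (-α)) *
      eLpNorm (fun x => a * |f (x + h)| - a * |f x|) (ENNReal.ofReal p) volume
      ≤ ENNReal.ofReal (‖h‖ ^ (-α)) *
        (ENNReal.ofReal a * eLpNorm (fun x => f (x + h) - f x) (ENNReal.ofReal p) volume) :=
        mul_le_mul_right key _
    _ = ENNReal.ofReal a * (ENNReal.ofReal (‖h‖ ^ (-α)) *
        eLpNorm (fun x => f (x + h) - f x) (ENNReal.ofReal p) volume) := by ring
    _ ≤ ENNReal.ofReal a * ⨆ (h : EuclideanSpace ℝ (Fin n)) (_ : h ≠ 0),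
        ENNReal.ofReal (‖h‖ ^ (-α)) *
          eLpNorm (fun x => f (x + h) - f x) (ENNReal.ofReal p) volume :=
        mul_le_mul_right
          (le_iSup₂ (f := fun (h : EuclideanSpace ℝ (Fin n)) (_ : h ≠ 0) =>
            ENNReal.ofReal (‖h‖ ^ (-α)) *
              eLpNorm (fun x => f (x + h) - f x) (ENNReal.ofReal p) volume) h hh) _

theorem besov_pointwise_multiplier (n : ℕ) (α p q : ℝ)
    (hα : α ∈ Set.Ioo (0 : ℝ) 1) (hp : 1 ≤ p) (hpn : p < (n : ℝ) / α) (hq : 1 ≤ q)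
    (μ : MeasureTheory.OuterMeasure (EuclideanSpace ℝ (Fin n)))
    (m : EuclideanSpace ℝ (Fin n) → ℝ) (hm : Measurable m) :
    ((∃ lam : ℝ, 0 < lam ∧ μ {x | lam < |m x|} = 0) →
      (∃ c : ℝ, 0 < c ∧ ∀ E : Set (EuclideanSpace ℝ (Fin n)), MeasurableSet E →
        μ E ≤ ENNReal.ofReal c * besovCapacity n α p E ^ (q / p)) →
      ∃ c' : ℝ, 0 < c' ∧ ∀ f : EuclideanSpace ℝ (Fin n) → ℝ,
        MemLp f (ENNReal.ofReal p) volume → besovSeminorm n α p f < ⊤ → Continuous f →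
        (⨆ (t : ℝ) (_ : 0 < t), (ENNReal.ofReal t ^ q * μ {x | t < |m x * f x|}) ^ (1 / q)) ≤
          ENNReal.ofReal c' * besovSeminorm n α p f) ∧
    ((∃ c : ℝ, 0 < c ∧ ∀ f : EuclideanSpace ℝ (Fin n) → ℝ,
        MemLp f (ENNReal.ofReal p) volume → besovSeminorm n α p f < ⊤ → Continuous f →
        (⨆ (t : ℝ) (_ : 0 < t), (ENNReal.ofReal t ^ q * μ {x | t < |m x * f x|}) ^ (1 / q)) ≤
          ENNReal.ofReal c * besovSeminorm n α p f) →
      ∃ c' : ℝ, 0 < c' ∧ ∀ E : Set (EuclideanSpace ℝ (Fin n)), MeasurableSet E →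
        (⨆ (t : ℝ) (_ : 0 < t), ENNReal.ofReal t ^ q * μ {x ∈ E | t < |m x|}) ≤
          ENNReal.ofReal c' * besovCapacity n α p E ^ (q / p)) := by
  have hp0 : (0:ℝ) < p := lt_of_lt_of_le one_pos hp
  have hq0 : (0:ℝ) < q := lt_of_lt_of_le one_pos hq
  have hqne : q ≠ 0 := hq0.ne'
  have hpne : p ≠ 0 := hp0.ne'
  constructor
  · rintro ⟨lam, hlam, hnull⟩ ⟨c, hc, hcap⟩
    refine ⟨c ^ (1/q) * lam, by positivity, fun f hf hsem hfc => ?_⟩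
    refine iSup₂_le fun t ht => ?_
    set S := besovSeminorm n α p f with hS
    set N := {x : EuclideanSpace ℝ (Fin n) | t / lam < |f x|} with hN
    have hNopen : IsOpen N := isOpen_lt continuous_const hfc.abs
    have hsub : {x | t < |m x * f x|} ⊆ {x | lam < |m x|} ∪ N := by
      intro x hx
      by_contra hxc
      simp only [Set.mem_union, Set.mem_setOf_eq, not_or, not_lt, hN] at hxc
      obtain ⟨h1, h2⟩ := hxc
      have hle : |m x * f x| ≤ t := by
        rw [abs_mul]
        calc |m x| * |f x| ≤ lam * (t/lam) := mul_le_mul h1 h2 (abs_nonneg _) hlam.le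
          _ = t := by field_simp
      exact absurd hx (not_lt.mpr hle)
    have hμ : μ {x | t < |m x * f x|} ≤ μ N := by
      calc μ {x | t < |m x * f x|} ≤ μ ({x | lam < |m x|} ∪ N) := measure_mono hsub
        _ ≤ μ {x | lam < |m x|} + μ N := measure_union_le _ _
        _ = μ N := by rw [hnull, zero_add]
    have hlt0 : (0:ℝ) < lam / t := by positivity
    set g := fun x : EuclideanSpace ℝ (Fin n) => lam / t * |f x| with hg
    have hadm : besovAdmissible n α p N g := by
      refine ⟨hf.abs.const_mul (lam / t), ?_, continuous_const.mul hfc.abs,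
        N, hNopen, subset_rfl, fun x hx => ?_⟩
      · exact lt_of_le_of_lt (besov_smul_abs_le n α p _ hlt0.le f)
          (ENNReal.mul_lt_top ENNReal.ofReal_lt_top hsem)
      · have hx' : t / lam < |f x| := hx
        have h2 := mul_le_mul_of_nonneg_left (le_of_lt hx') hlt0.le
        have e : lam / t * (t / lam) = 1 := by field_simp
        rw [e] at h2
        exact h2
    have hcapN : besovCapacity n α p N ≤ (ENNReal.ofReal (lam/t) * S) ^ p := by
      calc besovCapacity n α p N ≤ besovSeminorm n α p g ^ p := by
            simp only [besovCapacity]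
            exact iInf₂_le g hadm
        _ ≤ (ENNReal.ofReal (lam/t) * S) ^ p :=
            ENNReal.rpow_le_rpow (besov_smul_abs_le n α p _ hlt0.le f) hp0.le
    have hμN : μ {x | t < |m x * f x|} ≤
        ENNReal.ofReal c * ((ENNReal.ofReal (lam/t) * S) ^ p) ^ (q/p) :=
      hμ.trans ((hcap N hNopen.measurableSet).trans
        (mul_le_mul_right (ENNReal.rpow_le_rpow hcapN (by positivity)) _))
    have etq : ENNReal.ofReal t ^ q * ENNReal.ofReal (lam/t) ^ q
        = ENNReal.ofReal lam ^ q := by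
      rw [← ENNReal.mul_rpow_of_nonneg _ _ hq0.le, ← ENNReal.ofReal_mul ht.le,
        show t * (lam/t) = lam by field_simp]
    have main : ENNReal.ofReal t ^ q * μ {x | t < |m x * f x|} ≤
        ENNReal.ofReal c * ENNReal.ofReal lam ^ q * S ^ q := by
      calc ENNReal.ofReal t ^ q * μ {x | t < |m x * f x|}
          ≤ ENNReal.ofReal t ^ q *
            (ENNReal.ofReal c * ((ENNReal.ofReal (lam/t) * S) ^ p) ^ (q/p)) :=
            mul_le_mul_right hμN _
        _ = ENNReal.ofReal c * ENNReal.ofReal lam ^ q * S ^ q := by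
            rw [← ENNReal.rpow_mul, show p * (q/p) = q by field_simp,
              ENNReal.mul_rpow_of_nonneg _ _ hq0.le, ← etq]
            ring
    have hBeq : (ENNReal.ofReal (c ^ (1/q) * lam) * S) ^ q
        = ENNReal.ofReal c * ENNReal.ofReal lam ^ q * S ^ q := by
      have hr1 : (c ^ (1/q) * lam) ^ q = c * lam ^ q := by
        rw [Real.mul_rpow (by positivity) hlam.le, ← Real.rpow_mul hc.le,
          one_div_mul_cancel hqne, Real.rpow_one]
      rw [ENNReal.mul_rpow_of_nonneg _ _ hq0.le,
        ENNReal.ofReal_rpow_of_pos (show (0:ℝ) < c ^ (1/q) * lam by positivity),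
        hr1, ENNReal.ofReal_mul hc.le, ENNReal.ofReal_rpow_of_pos hlam]
    calc (ENNReal.ofReal t ^ q * μ {x | t < |m x * f x|}) ^ (1/q)
        ≤ ((ENNReal.ofReal (c ^ (1/q) * lam) * S) ^ q) ^ (1/q) := by
          refine ENNReal.rpow_le_rpow ?_ (by positivity)
          rw [hBeq]; exact main
      _ = ENNReal.ofReal (c ^ (1/q) * lam) * S := by
          rw [← ENNReal.rpow_mul, mul_one_div_cancel hqne, ENNReal.rpow_one]
  · rintro ⟨c, hc, hbound⟩
    refine ⟨c ^ q, Real.rpow_pos_of_pos hc q, fun E hE => ?_⟩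
    refine iSup₂_le fun t ht => ?_
    have key : ∀ g, besovAdmissible n α p E g →
        ENNReal.ofReal t ^ q * μ {x ∈ E | t < |m x|} ≤
          ENNReal.ofReal (c ^ q) * (besovSeminorm n α p g ^ p) ^ (q/p) := by
      intro g hgadm
      obtain ⟨hgL, hgS, hgC, N, hNo, hEN, hgN⟩ := hgadm
      have hsub : {x ∈ E | t < |m x|} ⊆ {x | t < |m x * g x|} := by
        rintro x ⟨hxE, hxm⟩
        have h1 : 1 ≤ g x := hgN x (hEN hxE)
        have h2 : t < |m x| * g x :=
          lt_of_lt_of_le hxm (le_mul_of_one_le_right (abs_nonneg _) h1)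
        have : |m x * g x| = |m x| * g x := by
          rw [abs_mul, abs_of_nonneg (le_trans zero_le_one h1)]
        rw [Set.mem_setOf_eq, this]; exact h2
      have h2 : (ENNReal.ofReal t ^ q * μ {x | t < |m x * g x|}) ^ (1/q) ≤
          ENNReal.ofReal c * besovSeminorm n α p g :=
        le_trans (le_iSup₂ (f := fun (t : ℝ) (_ : 0 < t) =>
            (ENNReal.ofReal t ^ q * μ {x | t < |m x * g x|}) ^ (1/q)) t ht)
          (hbound g hgL hgS hgC)
      have h3 : ENNReal.ofReal t ^ q * μ {x | t < |m x * g x|} ≤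
          (ENNReal.ofReal c * besovSeminorm n α p g) ^ q := by
        have h4 := ENNReal.rpow_le_rpow h2 hq0.le
        rwa [← ENNReal.rpow_mul, one_div_mul_cancel hqne, ENNReal.rpow_one] at h4
      calc ENNReal.ofReal t ^ q * μ {x ∈ E | t < |m x|}
          ≤ ENNReal.ofReal t ^ q * μ {x | t < |m x * g x|} :=
            mul_le_mul_right (measure_mono hsub) _
        _ ≤ (ENNReal.ofReal c * besovSeminorm n α p g) ^ q := h3
        _ = ENNReal.ofReal (c ^ q) * (besovSeminorm n α p g ^ p) ^ (q/p) := by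
            rw [ENNReal.mul_rpow_of_nonneg _ _ hq0.le,
              ENNReal.ofReal_rpow_of_pos hc, ← ENNReal.rpow_mul,
              show p * (q/p) = q by field_simp]
    have ha1 : ENNReal.ofReal (c ^ q) ≠ ∞ := ENNReal.ofReal_ne_top
    have ha0 : ENNReal.ofReal (c ^ q) ≠ 0 := by
      simp only [ne_eq, ENNReal.ofReal_eq_zero, not_le]
      positivity
    have ecap : ENNReal.ofReal (c ^ q) * besovCapacity n α p E ^ (q/p) =
        ⨅ (g : EuclideanSpace ℝ (Fin n) → ℝ) (_ : besovAdmissible n α p E g),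
          ENNReal.ofReal (c ^ q) * (besovSeminorm n α p g ^ p) ^ (q/p) := by
      have hr : (0:ℝ) < q / p := by positivity
      rw [besovCapacity, my_rpow_iInf _ hr]
      rw [ENNReal.mul_iInf_of_ne ha0 ha1]
      refine iInf_congr fun g => ?_
      rw [my_rpow_iInf _ hr,
        ENNReal.mul_iInf_of_ne ha0 ha1]
    rw [ecap]
    exact le_iInf₂ key
end
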